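/- Let $A$ be a unital complex Banach $\star$-algebra, $X$ a complex Banach space, $z \in A$, and $\phi : A \times A \to X$ a continuous bilinear map such that $\phi(a^\star, b) = \phi(1, z)$ whenever $a^\star b = z$. Then $\phi(a, az) = \phi(1, a^2 z)$ and $\phi(1, az) = \phi(a, z)$ for all $a \in A$, and there is a continuous linear map $\Phi : A \to X$ with $\phi(a, bz) + \phi(b, az) = \Phi(ab + ba)$ for all $a, b \in A$. -/

import Mathlib

open Filter Topology

private theorem eqAtZero_aux {X : Type*} [NormedAddCommGroup X] (f g : ℂ → X)
    (hf : ContinuousAt f 0) (hg : ContinuousAt g 0)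
    (h : ∀ᶠ t in 𝓝[≠] (0:ℂ), f t = g t) : f 0 = g 0 := by
  haveI : NeBot (𝓝[≠] (0:ℂ)) := NormedField.nhdsNE_neBot 0
  refine tendsto_nhds_unique (l := 𝓝[≠] (0:ℂ)) (hf.tendsto.mono_left nhdsWithin_le_nhds) ?_
  exact (hg.tendsto.mono_left nhdsWithin_le_nhds).congr' (h.mono fun t ht => ht.symm)

private theorem smul_cancel_aux {X : Type*} [AddCommGroup X] [Module ℂ X] {t : ℂ}
    (ht : t ≠ 0) {x y : X} (h : t • x = t • y) : x = y := by
  have := congrArg (fun v => t⁻¹ • v) h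
  simpa [inv_smul_smul₀ ht] using this

theorem stmt_17 (A X : Type*) [NormedRing A] [NormedAlgebra ℂ A] [CompleteSpace A]
    [StarRing A] [StarModule ℂ A] [ContinuousStar A]
    [NormedAddCommGroup X] [NormedSpace ℂ X] [CompleteSpace X]
    (z : A) (φ : A →L[ℂ] A →L[ℂ] X)
    (h : ∀ a b : A, star a * b = z → φ (star a) b = φ 1 z) :
    (∀ a : A, φ a (a * z) = φ 1 (a ^ 2 * z)) ∧
    (∀ a : A, φ 1 (a * z) = φ a z) ∧
    ∃ Φ : A →L[ℂ] X, ∀ a b : A, φ a (b * z) + φ b (a * z) = Φ (a * b + b * a) := by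
  -- Key consequence of `h`: for any unit `u`, `φ u (u⁻¹ z) = φ 1 z`.
  have key : ∀ u : Aˣ, φ (u : A) ((↑u⁻¹ : A) * z) = φ 1 z := by
    intro u
    have := h (star (u : A)) ((↑u⁻¹ : A) * z)
      (by rw [star_star, ← mul_assoc, Units.mul_inv, one_mul])
    rwa [star_star] at this
  have main : ∀ a : A, φ 1 (a * z) = φ a z ∧ φ a (a * z) = φ 1 (a ^ 2 * z) := by
    intro a
    set w : ℂ → A := fun t => a * (Ring.inverse (1 + t • a) * z) with hw
    have hw0 : w 0 = a * z := by simp [hw]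
    have hwc : ContinuousAt w 0 := by
      have h1 : ContinuousAt (fun t : ℂ => 1 + t • a) 0 := by fun_prop
      have h2 : ContinuousAt (Ring.inverse : A → A) (1 + (0:ℂ) • a) := by
        simpa using NormedRing.inverse_continuousAt (1 : Aˣ)
      have h3 : ContinuousAt (fun t : ℂ => Ring.inverse (1 + t • a)) 0 :=
        ContinuousAt.comp (g := (Ring.inverse : A → A)) (f := fun t : ℂ => 1 + t • a) h2 h1
      exact continuousAt_const.mul (h3.mul continuousAt_const)
    -- smallness, eventually
    have hsm : ∀ᶠ t : ℂ in 𝓝 0, ‖t • a‖ < 1 := by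
      have h0 : Tendsto (fun t : ℂ => ‖t • a‖) (𝓝 0) (𝓝 ‖(0:ℂ) • a‖) :=
        ((continuous_id.smul continuous_const).norm).continuousAt
      simp only [zero_smul, norm_zero] at h0
      exact h0.eventually_lt_const zero_lt_one
    have hunit : ∀ t : ℂ, ‖t • a‖ < 1 → IsUnit (1 + t • a) := by
      intro t ht
      have := (Units.oneSub (-(t • a)) (by rwa [norm_neg])).isUnit
      rwa [Units.val_oneSub, sub_neg_eq_add] at this
    have hvrec : ∀ t : ℂ, ‖t • a‖ < 1 →
        Ring.inverse (1 + t • a) = 1 - t • (a * Ring.inverse (1 + t • a)) := by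
      intro t ht
      have hmul : (1 + t • a) * Ring.inverse (1 + t • a) = 1 :=
        Ring.mul_inverse_cancel _ (hunit t ht)
      rw [add_mul, one_mul, smul_mul_assoc] at hmul
      exact eq_sub_of_add_eq hmul
    have hwexp : ∀ t : ℂ, ‖t • a‖ < 1 → w t = a * z - t • (a * w t) := by
      intro t ht
      show a * (Ring.inverse (1 + t • a) * z) = _
      conv_lhs => rw [hvrec t ht]
      simp only [sub_mul, one_mul, mul_sub, smul_mul_assoc, mul_smul_comm, mul_assoc]
      rfl
    -- the fundamental eventual identity
    have heq : ∀ᶠ t : ℂ in 𝓝 0, t • φ 1 (w t) = t • (φ a z - t • φ a (w t)) := by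
      filter_upwards [hsm] with t ht
      have hvz : Ring.inverse (1 + t • a) * z = z - t • w t := by
        conv_lhs => rw [hvrec t ht]
        rw [sub_mul, one_mul, smul_mul_assoc, mul_assoc]
      have hkey : φ (1 + t • a) (Ring.inverse (1 + t • a) * z) = φ 1 z := by
        obtain ⟨u, hu⟩ := hunit t ht
        rw [← hu, Ring.inverse_unit]
        exact key u
      rw [hvz] at hkey
      simp only [map_add, map_smul, map_sub, ContinuousLinearMap.add_apply,
        ContinuousLinearMap.smul_apply, ContinuousLinearMap.map_sub,
        ContinuousLinearMap.map_smul] at hkey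
      -- hkey : φ 1 z + t • φ a z - t • (φ 1 (w t) + t • φ a (w t)) = φ 1 z
      have hv2 : t • (φ 1 (w t) + t • φ a (w t)) = t • φ a z := by
        linear_combination (norm := abel) -hkey
      rw [smul_add] at hv2
      rw [smul_sub]
      linear_combination (norm := abel) hv2
    -- Claim 2
    have c2 : φ 1 (a * z) = φ a z := by
      have := eqAtZero_aux (fun t => φ 1 (w t)) (fun t => φ a z - t • φ a (w t))
        ((φ 1).continuous.continuousAt.comp hwc)
        (continuousAt_const.sub (continuousAt_id.smul ((φ a).continuous.continuousAt.comp hwc)))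
        (by
          filter_upwards [heq.filter_mono nhdsWithin_le_nhds, eventually_mem_nhdsWithin]
            with t h1 ht
          exact smul_cancel_aux ht h1)
      simpa [hw0] using this
    refine ⟨c2, ?_⟩
    -- Claim 1
    have heq2 : ∀ᶠ t : ℂ in 𝓝[≠] (0:ℂ), φ 1 (a * w t) = φ a (w t) := by
      filter_upwards [(heq.and hsm).filter_mono nhdsWithin_le_nhds, eventually_mem_nhdsWithin]
        with t h1 ht
      obtain ⟨h1, hsmt⟩ := h1
      have ht' : (t : ℂ) ≠ 0 := ht
      have hA : φ 1 (w t) = φ a z - t • φ 1 (a * w t) := by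
        conv_lhs => rw [hwexp t hsmt]
        rw [map_sub, map_smul, ← c2]
      rw [hA] at h1
      have h1' := smul_cancel_aux ht' h1
      have h2' : t • φ 1 (a * w t) = t • φ a (w t) := sub_right_inj.mp h1'
      exact smul_cancel_aux ht' h2'
    have := eqAtZero_aux (fun t => φ 1 (a * w t)) (fun t => φ a (w t))
      ((φ 1).continuous.continuousAt.comp (continuousAt_const.mul hwc))
      ((φ a).continuous.continuousAt.comp hwc) heq2
    simp only [hw0] at this
    rw [sq, mul_assoc]
    exact this.symm
  refine ⟨fun a => (main a).2, fun a => (main a).1, ?_⟩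
  refine ⟨(φ 1).comp (((ContinuousLinearMap.mul ℂ A).flip) z), fun a b => ?_⟩
  have h1 := (main a).2
  have h2 := (main b).2
  have hab := (main (a + b)).2
  have hsq : (a + b) ^ 2 * z = a ^ 2 * z + (a * b + b * a) * z + b ^ 2 * z := by
    noncomm_ring
  rw [hsq] at hab
  simp only [map_add, add_mul, ContinuousLinearMap.add_apply] at hab
  simp only [ContinuousLinearMap.comp_apply, ContinuousLinearMap.flip_apply,
    ContinuousLinearMap.mul_apply']
  rw [add_mul, map_add]
  linear_combination (norm := abel) hab - h1 - h2
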